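/- Let α > 1, k > 0, and let φ satisfy φ'(s) = (1+α²k²φ(s)^{2α-2})^{-1/2} with lim_{s→∞} s^{-1/α}φ(s) = k^{-1/α}. Define γ(s) = α(α-1)kφ(s)^{α-2}φ'(s)³. Then lim_{s→∞} s² γ(s)² = 0, i.e. γ(s) = o(1/s) as s → ∞. -/

import Mathlib

open Real Filter Set

theorem stmt12 (α k : ℝ) (hα : 1 < α) (hk : 0 < k) (φ : ℝ → ℝ)
    (hφmap : ∀ s ≥ 0, 0 ≤ φ s)
    (hODE : ∀ s ≥ 0, deriv φ s = (1 + α ^ 2 * k ^ 2 * (φ s) ^ (2 * α - 2)) ^ (-(1 / 2 : ℝ)))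
    (hasym : Tendsto (fun s : ℝ => s ^ (-(1 / α)) * φ s) atTop (nhds (k ^ (-(1 / α)))))
    (γ : ℝ → ℝ)
    (hγ : ∀ s, γ s = α * (α - 1) * k * (φ s) ^ (α - 2) * (deriv φ s) ^ 3) :
    Tendsto (fun s : ℝ => s ^ 2 * (γ s) ^ 2) atTop (nhds 0) := by
  have hα0 : (0:ℝ) < α := lt_trans one_pos hα
  have hαne : α ≠ 0 := hα0.ne'
  have hAk : (0:ℝ) ≤ α * (α - 1) * k :=
    mul_nonneg (mul_nonneg hα0.le (by linarith)) hk.le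
  set L : ℝ := k ^ (-(1/α)) with hLdef
  have hL0 : 0 < L := Real.rpow_pos_of_pos hk _
  -- φ tends to atTop
  have hφtop : Tendsto φ atTop atTop := by
    have h1 : Tendsto (fun s : ℝ => s ^ (1/α)) atTop atTop :=
      tendsto_rpow_atTop (by positivity)
    have h2 := h1.atTop_mul_pos hL0 hasym
    refine h2.congr' ?_
    filter_upwards [eventually_gt_atTop 0] with s hs
    rw [← mul_assoc, ← Real.rpow_add hs]
    simp
  set B : ℝ := α * (α - 1) * k * (α ^ 2 * k ^ 2) ^ (-(3/2) : ℝ) with hBdef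
  set h : ℝ → ℝ := fun s => B * (s ^ (-(1/α)) * φ s) ^ (1 - 2*α) * s ^ (-((α-1)/α)) with hhdef
  have key : Tendsto (fun s => s * γ s) atTop (nhds 0) := by
    have hh0 : Tendsto h atTop (nhds 0) := by
      have h1 : Tendsto (fun s : ℝ => B * (s ^ (-(1/α)) * φ s) ^ (1 - 2*α)) atTop
          (nhds (B * L ^ (1 - 2*α))) :=
        (hasym.rpow_const (Or.inl hL0.ne')).const_mul B
      have h2 : Tendsto (fun s : ℝ => s ^ (-((α-1)/α))) atTop (nhds 0) :=
        tendsto_rpow_neg_atTop (div_pos (by linarith) hα0)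
      simpa [hhdef] using h1.mul h2
    have hlow : ∀ᶠ s in atTop, (0:ℝ) ≤ s * γ s := by
      filter_upwards [eventually_ge_atTop (0:ℝ)] with s hs
      have hd : 0 < deriv φ s := by
        rw [hODE s hs]
        have : 0 ≤ α ^ 2 * k ^ 2 * (φ s) ^ (2*α - 2) :=
          mul_nonneg (by positivity) (Real.rpow_nonneg (hφmap s hs) _)
        exact Real.rpow_pos_of_pos (by linarith) _
      have hφn : 0 ≤ (φ s) ^ (α - 2) := Real.rpow_nonneg (hφmap s hs) _
      rw [hγ]
      exact mul_nonneg hs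
        (mul_nonneg (mul_nonneg hAk hφn) (pow_nonneg hd.le 3))
    have hup : ∀ᶠ s in atTop, s * γ s ≤ h s := by
      filter_upwards [eventually_ge_atTop (1:ℝ), hφtop.eventually_ge_atTop (1:ℝ)]
        with s hs1 hφ1
      have hs0 : (0:ℝ) < s := lt_of_lt_of_le one_pos hs1
      have hφ0 : (0:ℝ) < φ s := lt_of_lt_of_le one_pos hφ1
      have hy : (0:ℝ) < (φ s) ^ (2*α - 2) := Real.rpow_pos_of_pos hφ0 _
      have hc : (0:ℝ) < α ^ 2 * k ^ 2 := by positivity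
      have hcy : (0:ℝ) < α ^ 2 * k ^ 2 * (φ s) ^ (2*α - 2) := mul_pos hc hy
      have hX : (0:ℝ) < 1 + α ^ 2 * k ^ 2 * (φ s) ^ (2*α - 2) := by linarith
      -- rewrite the derivative cube
      have hd3 : (deriv φ s) ^ 3
          = (1 + α ^ 2 * k ^ 2 * (φ s) ^ (2*α - 2)) ^ (-(3/2) : ℝ) := by
        rw [hODE s hs0.le, ← Real.rpow_natCast _ 3, ← Real.rpow_mul hX.le]
        norm_num
      -- bound on γ
      have hγb : γ s ≤ B * (φ s) ^ (1 - 2*α) := by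
        rw [hγ, hd3]
        have hb1 : (1 + α ^ 2 * k ^ 2 * (φ s) ^ (2*α - 2)) ^ (-(3/2) : ℝ)
            ≤ (α ^ 2 * k ^ 2 * (φ s) ^ (2*α - 2)) ^ (-(3/2) : ℝ) :=
          Real.rpow_le_rpow_of_nonpos hcy (by linarith) (by norm_num)
        have hb2 : (α ^ 2 * k ^ 2 * (φ s) ^ (2*α - 2)) ^ (-(3/2) : ℝ)
            = (α ^ 2 * k ^ 2) ^ (-(3/2) : ℝ) * (φ s) ^ ((2*α - 2) * (-(3/2))) := by
          rw [Real.mul_rpow hc.le hy.le, ← Real.rpow_mul hφ0.le]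
        have hφn : (0:ℝ) ≤ (φ s) ^ (α - 2) := Real.rpow_nonneg hφ0.le _
        calc α * (α-1) * k * (φ s) ^ (α - 2)
              * ((1 + α ^ 2 * k ^ 2 * (φ s) ^ (2*α - 2)) ^ (-(3/2) : ℝ))
            ≤ α * (α-1) * k * (φ s) ^ (α - 2)
              * ((α ^ 2 * k ^ 2) ^ (-(3/2) : ℝ) * (φ s) ^ ((2*α - 2) * (-(3/2)))) := by
              rw [← hb2]
              exact mul_le_mul_of_nonneg_left hb1 (mul_nonneg hAk hφn)
          _ = B * ((φ s) ^ (α - 2) * (φ s) ^ ((2*α - 2) * (-(3/2)))) := by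
              rw [hBdef]; ring
          _ = B * (φ s) ^ (1 - 2*α) := by
              rw [← Real.rpow_add hφ0]
              ring_nf
      have hB0 : 0 ≤ B := by
        rw [hBdef]
        exact mul_nonneg hAk (Real.rpow_nonneg hc.le _)
      -- the algebraic identity for h
      have e0 : (s ^ (-(1/α)) * φ s) ^ (1 - 2*α)
          = s ^ (-(1/α) * (1 - 2*α)) * (φ s) ^ (1 - 2*α) := by
        rw [Real.mul_rpow (Real.rpow_nonneg hs0.le _) hφ0.le, ← Real.rpow_mul hs0.le]
      have e1 : s ^ (-(1/α) * (1 - 2*α)) * s ^ (-((α-1)/α)) = s := by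
        rw [← Real.rpow_add hs0,
          show -(1/α) * (1 - 2*α) + -((α-1)/α) = 1 from by field_simp; ring,
          Real.rpow_one]
      have hhs : h s = B * (φ s) ^ (1 - 2*α) * s := by
        rw [hhdef]
        simp only
        rw [e0]
        calc B * (s ^ (-(1/α) * (1 - 2*α)) * (φ s) ^ (1 - 2*α)) * s ^ (-((α-1)/α))
            = B * (φ s) ^ (1 - 2*α) * (s ^ (-(1/α) * (1 - 2*α)) * s ^ (-((α-1)/α))) := by
              ring
          _ = B * (φ s) ^ (1 - 2*α) * s := by rw [e1]
      rw [hhs]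
      calc s * γ s ≤ s * (B * (φ s) ^ (1 - 2*α)) :=
            mul_le_mul_of_nonneg_left hγb hs0.le
        _ = B * (φ s) ^ (1 - 2*α) * s := by ring
    exact tendsto_of_tendsto_of_tendsto_of_le_of_le' tendsto_const_nhds hh0 hlow hup
  have h2 : Tendsto (fun s => (s * γ s) ^ 2) atTop (nhds 0) := by
    simpa using key.pow 2
  simpa [mul_pow] using h2
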